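/- Let M be a W*-bundle over a compact Hausdorff space X and (B,p) its topological bundle. Then the restriction of p to the unit ball B_{≤1} = {b ∈ B : ‖b‖ ≤ 1} is an open map B_{≤1} → X, and consequently p : B → X itself is a continuous open surjection. -/

import Mathlib

/-- Fibre equivalence: `a ~ b` in the fibre over `x` iff `E((a-b)*(a-b))(x) = 0`. -/
def fibRel {X M : Type*} [TopologicalSpace X] [CompactSpace X] [NormedRing M] [StarRing M]
    [NormedAlgebra ℂ M] (E : M →ₗ[ℂ] C(X, ℂ)) (x : X) (a b : M) : Prop :=
  E (star (a - b) * (a - b)) x = 0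

/-- The total space `B = ⨆_{x ∈ X} M_x` of the topological bundle of a W*-bundle. -/
def WTotalSpace {X M : Type*} [TopologicalSpace X] [CompactSpace X] [NormedRing M] [StarRing M]
    [NormedAlgebra ℂ M] (E : M →ₗ[ℂ] C(X, ℂ)) : Type _ :=
  Σ x : X, Quot (fibRel E x)

/-- The basic set `V(a, ε, U)`. -/
def Vset {X M : Type*} [TopologicalSpace X] [CompactSpace X] [NormedRing M] [StarRing M]
    [NormedAlgebra ℂ M] (E : M →ₗ[ℂ] C(X, ℂ)) (a : M) (ε : ℝ) (U : Set X) :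
    Set (WTotalSpace E) :=
  {b | b.1 ∈ U ∧ ∃ c : M, Quot.mk (fibRel E b.1) c = b.2 ∧
    Real.sqrt ((E (star (a - c) * (a - c)) b.1).re) < ε}

/-- The collection of basic sets. -/
def VBasis {X M : Type*} [TopologicalSpace X] [CompactSpace X] [NormedRing M] [StarRing M]
    [NormedAlgebra ℂ M] (E : M →ₗ[ℂ] C(X, ℂ)) : Set (Set (WTotalSpace E)) :=
  {V | ∃ (a : M) (ε : ℝ) (U : Set X), 0 < ε ∧ IsOpen U ∧ V = Vset E a ε U}

/-- The bundle topology on the total space. -/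
def bundleTopology {X M : Type*} [TopologicalSpace X] [CompactSpace X] [NormedRing M]
    [StarRing M] [NormedAlgebra ℂ M] (E : M →ₗ[ℂ] C(X, ℂ)) :
    TopologicalSpace (WTotalSpace E) :=
  TopologicalSpace.generateFrom (VBasis E)

section Stmt15Aux

set_option linter.unusedSectionVars false

variable {X M : Type*} [TopologicalSpace X] [CompactSpace X] [NormedRing M] [StarRing M]
    [NormedAlgebra ℂ M] [StarModule ℂ M]

/-- The pointwise quadratic form `qf E x a = (E (a* a) x).re`. -/
noncomputable def qf (E : M →ₗ[ℂ] C(X, ℂ)) (x : X) (a : M) : ℝ := (E (star a * a) x).re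

/-- The fibre seminorm. -/
noncomputable def nn (E : M →ₗ[ℂ] C(X, ℂ)) (x : X) (a : M) : ℝ := Real.sqrt (qf E x a)

variable (E : M →ₗ[ℂ] C(X, ℂ))
    (hpos : ∀ (a : M) (x : X), 0 ≤ (E (star a * a) x).re ∧ (E (star a * a) x).im = 0)
    (hstar : ∀ a : M, E (star a) = star (E a))

include hpos hstar

lemma qf_nonneg (x : X) (a : M) : 0 ≤ qf E x a := (hpos a x).1

lemma herm (x : X) (a b : M) :
    E (star a * b) x = (starRingEnd ℂ) (E (star b * a) x) := by
  have h1 : star (star b * a) = star a * b := by rw [star_mul, star_star]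
  have h2 := hstar (star b * a)
  rw [h1] at h2
  rw [h2]
  rfl

lemma qf_add (x : X) (a b : M) :
    qf E x (a + b) = qf E x a + 2 * (E (star a * b) x).re + qf E x b := by
  have hexp : star (a + b) * (a + b)
      = star a * a + star a * b + star b * a + star b * b := by
    rw [star_add, add_mul, mul_add, mul_add]; abel
  have hre : (E (star b * a) x).re = (E (star a * b) x).re := by
    rw [herm E hpos hstar x a b]; simp
  unfold qf
  rw [hexp]
  simp only [map_add, ContinuousMap.add_apply, Complex.add_re]
  rw [hre]; ring

lemma qf_smul (x : X) (z : ℂ) (a : M) :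
    qf E x (z • a) = Complex.normSq z * qf E x a := by
  unfold qf
  have h1 : star (z • a) * (z • a) = (star z * z) • (star a * a) := by
    rw [star_smul, smul_mul_smul_comm]
  have h2 : star z * z = ((Complex.normSq z : ℝ) : ℂ) := by
    rw [Complex.star_def, mul_comm, Complex.mul_conj]
  rw [h1, h2, map_smul]
  simp [Complex.re_ofReal_mul]

lemma cs (x : X) (a b : M) :
    ((E (star a * b) x).re) ^ 2 ≤ qf E x a * qf E x b := by
  set R := (E (star a * b) x).re with hR
  have key : ∀ t : ℝ, 0 ≤ qf E x a * (t * t) + (2 * R) * t + qf E x b := by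
    intro t
    have h0 := (hpos ((t : ℂ) • a + b) x).1
    have heq : qf E x ((t : ℂ) • a + b)
        = qf E x a * (t * t) + (2 * R) * t + qf E x b := by
      rw [qf_add E hpos hstar, qf_smul E hpos hstar]
      have hmid : (E (star ((t : ℂ) • a) * b) x).re = t * R := by
        have : star ((t : ℂ) • a) * b = (t : ℂ) • (star a * b) := by
          rw [star_smul, smul_mul_assoc]
          norm_num
        rw [this, map_smul]
        simp [Complex.re_ofReal_mul, hR]
      rw [hmid]
      simp [Complex.normSq_ofReal]
      ring
    rw [← heq]
    exact h0
  have hd := discrim_le_zero key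
  rw [discrim] at hd
  nlinarith [hd]

lemma nn_nonneg (x : X) (a : M) : 0 ≤ nn E x a := Real.sqrt_nonneg _

lemma nn_sq (x : X) (a : M) : nn E x a ^ 2 = qf E x a :=
  Real.sq_sqrt (qf_nonneg E hpos hstar x a)

lemma nn_triangle (x : X) (a b : M) :
    nn E x (a + b) ≤ nn E x a + nn E x b := by
  have hA := qf_nonneg E hpos hstar x a
  have hB := qf_nonneg E hpos hstar x b
  have hcs := cs E hpos hstar x a b
  have habs : (E (star a * b) x).re ≤ nn E x a * nn E x b := by
    have h1 : nn E x a * nn E x b = Real.sqrt (qf E x a * qf E x b) :=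
      (Real.sqrt_mul hA _).symm
    have h2 : (E (star a * b) x).re ≤ |(E (star a * b) x).re| := le_abs_self _
    have h3 : |(E (star a * b) x).re| = Real.sqrt (((E (star a * b) x).re) ^ 2) :=
      (Real.sqrt_sq_eq_abs _).symm
    have h4 : Real.sqrt (((E (star a * b) x).re) ^ 2)
        ≤ Real.sqrt (qf E x a * qf E x b) := Real.sqrt_le_sqrt hcs
    linarith
  have hq : qf E x (a + b) ≤ (nn E x a + nn E x b) ^ 2 := by
    rw [qf_add E hpos hstar]
    nlinarith [nn_sq E hpos hstar x a, nn_sq E hpos hstar x b]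
  calc nn E x (a + b) = Real.sqrt (qf E x (a + b)) := rfl
    _ ≤ Real.sqrt ((nn E x a + nn E x b) ^ 2) := Real.sqrt_le_sqrt hq
    _ = nn E x a + nn E x b := Real.sqrt_sq (add_nonneg (nn_nonneg E hpos hstar x a) (nn_nonneg E hpos hstar x b))

lemma nn_zero (x : X) : nn E x 0 = 0 := by
  unfold nn qf
  simp

lemma nn_smul (x : X) (z : ℂ) (a : M) :
    nn E x (z • a) = ‖z‖ * nn E x a := by
  unfold nn
  rw [qf_smul E hpos hstar, Real.sqrt_mul (Complex.normSq_nonneg _), Complex.norm_def]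

lemma fibRel_iff (x : X) (a b : M) : fibRel E x a b ↔ nn E x (a - b) = 0 := by
  unfold fibRel nn qf
  constructor
  · intro h; rw [h]; simp
  · intro h
    have him := (hpos (a - b) x).2
    have h1 := Real.sqrt_eq_zero'.mp h
    have h2 := (hpos (a - b) x).1
    have hre : (E (star (a - b) * (a - b)) x).re = 0 := le_antisymm h1 h2
    exact Complex.ext hre him

lemma fibRel_equiv (x : X) : Equivalence (fibRel E x) := by
  constructor
  · intro a; unfold fibRel; simp
  · intro a b h
    unfold fibRel at *
    have hh : b - a = -(a - b) := (neg_sub a b).symm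
    rw [hh, star_neg, neg_mul_neg]
    exact h
  · intro a b c hab hbc
    rw [fibRel_iff E hpos hstar] at *
    have heq : a - c = (a - b) + (b - c) := by abel
    have ht := nn_triangle E hpos hstar x (a - b) (b - c)
    have hnn := nn_nonneg E hpos hstar x (a - c)
    rw [← heq] at ht
    linarith

lemma nn_of_mk_eq (x : X) {c c' : M}
    (h : Quot.mk (fibRel E x) c = Quot.mk (fibRel E x) c') : nn E x (c - c') = 0 :=
  (fibRel_iff E hpos hstar x c c').mp
    (((fibRel_equiv E hpos hstar x).eqvGen_iff).mp (Quot.eqvGen_exact h))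

lemma key : ∀ W : Set (WTotalSpace E), TopologicalSpace.GenerateOpen (VBasis E) W →
    ∀ b ∈ W, ∀ c : M, Quot.mk (fibRel E b.1) c = b.2 →
    ∃ δ > 0, ∀ c' : M, nn E b.1 (c - c') < δ →
      ∃ U : Set X, IsOpen U ∧ b.1 ∈ U ∧
        ∀ x' ∈ U, (⟨x', Quot.mk (fibRel E x') c'⟩ : WTotalSpace E) ∈ W := by
  intro W hW
  induction hW with
  | basic V hV =>
    obtain ⟨a, ε, U, hε, hU, rfl⟩ := hV
    rintro ⟨x, q⟩ ⟨hxU, c₀, hc₀, hlt⟩ c hc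
    dsimp only at hxU hc₀ hlt hc ⊢
    have h0 : nn E x (c₀ - c) = 0 := nn_of_mk_eq E hpos hstar x (hc₀.trans hc.symm)
    have hlt' : nn E x (a - c₀) < ε := hlt
    have hac : nn E x (a - c) < ε := by
      have heq : a - c = (a - c₀) + (c₀ - c) := by abel
      have ht := nn_triangle E hpos hstar x (a - c₀) (c₀ - c)
      rw [← heq] at ht
      linarith
    refine ⟨ε - nn E x (a - c), by linarith, ?_⟩
    intro c' hc'
    have hac' : nn E x (a - c') < ε := by
      have heq : a - c' = (a - c) + (c - c') := by abel
      have ht := nn_triangle E hpos hstar x (a - c) (c - c')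
      rw [← heq] at ht
      linarith
    refine ⟨U ∩ {x' | (E (star (a - c') * (a - c')) x').re < ε ^ 2}, ?_, ⟨hxU, ?_⟩, ?_⟩
    · refine hU.inter (isOpen_lt ?_ continuous_const)
      exact Complex.continuous_re.comp (E (star (a - c') * (a - c'))).continuous
    · show qf E x (a - c') < ε ^ 2
      have h1 := nn_sq E hpos hstar x (a - c')
      have h2 := nn_nonneg E hpos hstar x (a - c')
      nlinarith
    · rintro x' ⟨hx'U, hx'lt⟩
      refine ⟨hx'U, c', rfl, ?_⟩
      exact (Real.sqrt_lt' hε).mpr hx'lt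
  | univ =>
    intro b _ c _
    exact ⟨1, one_pos, fun c' _ => ⟨Set.univ, isOpen_univ, trivial, fun _ _ => trivial⟩⟩
  | inter W₁ W₂ h₁ h₂ ih₁ ih₂ =>
    intro b hb c hc
    obtain ⟨δ₁, hδ₁, H₁⟩ := ih₁ b hb.1 c hc
    obtain ⟨δ₂, hδ₂, H₂⟩ := ih₂ b hb.2 c hc
    refine ⟨min δ₁ δ₂, lt_min hδ₁ hδ₂, fun c' hc' => ?_⟩
    obtain ⟨U₁, o₁, m₁, s₁⟩ := H₁ c' (lt_of_lt_of_le hc' (min_le_left _ _))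
    obtain ⟨U₂, o₂, m₂, s₂⟩ := H₂ c' (lt_of_lt_of_le hc' (min_le_right _ _))
    exact ⟨U₁ ∩ U₂, o₁.inter o₂, ⟨m₁, m₂⟩, fun x' hx' => ⟨s₁ x' hx'.1, s₂ x' hx'.2⟩⟩
  | sUnion S hS ih =>
    intro b hb c hc
    obtain ⟨t, ht, hbt⟩ := hb
    obtain ⟨δ, hδ, H⟩ := ih t ht b hbt c hc
    refine ⟨δ, hδ, fun c' hc' => ?_⟩
    obtain ⟨U, o, m, s⟩ := H c' hc'
    exact ⟨U, o, m, fun x' hx' => ⟨t, ht, s x' hx'⟩⟩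

end Stmt15Aux

/-- The combined fibre C*-norm `‖·‖ : B → ℝ` (the quotient norm, computed via a choice of
representative). -/
noncomputable def cnB {X M : Type*} [TopologicalSpace X] [CompactSpace X] [NormedRing M]
    [StarRing M] [NormedAlgebra ℂ M] (E : M →ₗ[ℂ] C(X, ℂ)) (b : WTotalSpace E) : ℝ :=
  sInf {r : ℝ | ∃ j : M, E (star j * j) b.1 = 0 ∧ r = ‖Quot.out b.2 - j‖}

/-- on the topological bundle `(B,p)` of a W*-bundle, the projection `p`
restricted to the C*-norm unit ball `B_{≤1}` is an open map onto `X`, and consequently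
`p : B → X` itself is a continuous open surjection. -/
theorem stmt15 {X M : Type*} [TopologicalSpace X] [CompactSpace X] [T2Space X]
    [NormedRing M] [StarRing M] [CStarRing M] [NormedAlgebra ℂ M]
    [StarModule ℂ M] [CompleteSpace M]
    (E : M →ₗ[ℂ] C(X, ℂ))
    (hE1 : E 1 = 1)
    (htr : ∀ a b : M, E (a * b) = E (b * a))
    (hpos : ∀ (a : M) (x : X), 0 ≤ (E (star a * a) x).re ∧ (E (star a * a) x).im = 0)
    (hstar : ∀ a : M, E (star a) = star (E a))
    (hfaith : ∀ a : M, E (star a * a) = 0 → a = 0)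
    (hcontr : ∀ a : M, ‖E a‖ ≤ ‖a‖) :
    -- p restricted to the unit ball is open
    (∀ W : Set (WTotalSpace E), (bundleTopology E).IsOpen W →
      IsOpen ((fun b : WTotalSpace E => b.1) '' (W ∩ {b | cnB E b ≤ 1}))) ∧
    -- p is continuous
    (@Continuous _ _ (bundleTopology E) _ (fun b : WTotalSpace E => b.1)) ∧
    -- p is open
    (∀ W : Set (WTotalSpace E), (bundleTopology E).IsOpen W →
      IsOpen ((fun b : WTotalSpace E => b.1) '' W)) ∧
    -- p is surjective
    Function.Surjective (fun b : WTotalSpace E => b.1) := by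
  letI : TopologicalSpace (WTotalSpace E) := bundleTopology E
  refine ⟨?_, ?_, ?_, fun x => ⟨⟨x, Quot.mk _ 0⟩, rfl⟩⟩
  · -- p restricted to the unit ball is open
    intro W hW
    have hW' : TopologicalSpace.GenerateOpen (VBasis E) W := hW
    rw [isOpen_iff_forall_mem_open]
    rintro x ⟨b, ⟨hbW, hb1⟩, rfl⟩
    have hb1' : cnB E b ≤ 1 := hb1
    obtain ⟨δ, hδ, H⟩ := key E hpos hstar W hW' b hbW (Quot.out b.2) (Quot.out_eq _)
    set c : M := Quot.out b.2 with hcdef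
    have hnnc : 0 ≤ nn E b.1 c := nn_nonneg E hpos hstar b.1 c
    set η : ℝ := δ / (2 * (nn E b.1 c + 1)) with hηdef
    have hηpos : 0 < η := by positivity
    have hne : {r : ℝ | ∃ j : M, E (star j * j) b.1 = 0 ∧ r = ‖Quot.out b.2 - j‖}.Nonempty :=
      ⟨‖Quot.out b.2 - 0‖, 0, by simp, rfl⟩
    have hlt : sInf {r : ℝ | ∃ j : M, E (star j * j) b.1 = 0 ∧ r = ‖Quot.out b.2 - j‖}
        < 1 + η := lt_of_le_of_lt hb1' (by linarith)
    obtain ⟨r, ⟨j, hj0, rfl⟩, hrlt⟩ := exists_lt_of_csInf_lt hne hlt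
    rw [← hcdef] at hrlt
    set t : ℂ := (((1 + η : ℝ) : ℂ))⁻¹ with htdef
    set a : M := t • (c - j) with hadef
    have hηle : (1 + η)⁻¹ ≤ 1 := by
      rw [inv_le_one_iff₀]; right; linarith
    have hηge : (0:ℝ) ≤ (1 + η)⁻¹ := by positivity
    have habs_t : ‖t‖ = (1 + η)⁻¹ := by
      rw [htdef, norm_inv, Complex.norm_real, Real.norm_eq_abs, abs_of_pos (by linarith)]
    have hnnj : nn E b.1 j = 0 := by
      unfold nn qf; rw [hj0]; simp
    have hca : nn E b.1 (c - a) < δ := by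
      have hsplit : c - a = ((1 : ℂ) - t) • c + t • j := by
        rw [hadef, smul_sub, sub_smul, one_smul]
        abel
      have ht1 := nn_triangle E hpos hstar b.1 (((1 : ℂ) - t) • c) (t • j)
      rw [← hsplit] at ht1
      rw [nn_smul E hpos hstar, nn_smul E hpos hstar, hnnj, mul_zero, add_zero] at ht1
      have habs1 : ‖(1 : ℂ) - t‖ ≤ η := by
        have : (1 : ℂ) - t = ((1 - (1 + η)⁻¹ : ℝ) : ℂ) := by
          rw [htdef]; push_cast; ring
        rw [this, Complex.norm_real, Real.norm_eq_abs, abs_of_nonneg (by linarith)]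
        have h1 : 1 - (1 + η)⁻¹ = η / (1 + η) := by
          field_simp; ring
        rw [h1]
        rw [div_le_iff₀ (by linarith)]
        nlinarith
      have hmul : ‖(1 : ℂ) - t‖ * nn E b.1 c ≤ η * nn E b.1 c :=
        mul_le_mul_of_nonneg_right habs1 hnnc
      have hfin : η * nn E b.1 c < δ := by
        have h2 : η * (nn E b.1 c + 1) = δ / 2 := by
          rw [hηdef]; field_simp
        nlinarith
      linarith
    obtain ⟨U, hUo, hUx, hUs⟩ := H a hca
    refine ⟨U, ?_, hUo, hUx⟩
    intro x' hx'
    refine ⟨⟨x', Quot.mk _ a⟩, ⟨hUs x' hx', ?_⟩, rfl⟩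
    show cnB E ⟨x', Quot.mk _ a⟩ ≤ 1
    have ho : fibRel E x' (Quot.out (Quot.mk (fibRel E x') a)) a :=
      ((fibRel_equiv E hpos hstar x').eqvGen_iff).mp (Quot.eqvGen_exact (Quot.out_eq _))
    have hbdd : BddBelow {r : ℝ | ∃ j' : M, E (star j' * j') x' = 0 ∧
        r = ‖Quot.out (Quot.mk (fibRel E x') a) - j'‖} := by
      refine ⟨0, ?_⟩
      rintro r ⟨j', _, rfl⟩
      exact norm_nonneg _
    have hmem : ‖a‖ ∈ {r : ℝ | ∃ j' : M, E (star j' * j') x' = 0 ∧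
        r = ‖Quot.out (Quot.mk (fibRel E x') a) - j'‖} := by
      refine ⟨Quot.out (Quot.mk (fibRel E x') a) - a, ho, ?_⟩
      rw [sub_sub_cancel]
    have h1 : cnB E ⟨x', Quot.mk _ a⟩ ≤ ‖a‖ := csInf_le hbdd hmem
    have h2 : ‖a‖ ≤ 1 := by
      rw [hadef, norm_smul]
      have : ‖t‖ = (1 + η)⁻¹ := habs_t
      rw [this]
      calc (1 + η)⁻¹ * ‖c - j‖ ≤ (1 + η)⁻¹ * (1 + η) :=
            mul_le_mul_of_nonneg_left hrlt.le hηge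
        _ = 1 := by field_simp
    linarith
  · -- p is continuous
    show Continuous fun b : WTotalSpace E => b.1
    rw [continuous_def]
    intro U hU
    have heq : (fun b : WTotalSpace E => b.1) ⁻¹' U = ⋃ a : M, Vset E a 1 U := by
      ext b
      simp only [Set.mem_preimage, Set.mem_iUnion]
      constructor
      · intro hb
        exact ⟨Quot.out b.2, hb, Quot.out b.2, Quot.out_eq _, by simp⟩
      · rintro ⟨a, hbU, -⟩
        exact hbU
    rw [heq]
    exact isOpen_iUnion fun a =>
      TopologicalSpace.GenerateOpen.basic _ ⟨a, 1, U, one_pos, hU, rfl⟩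
  · -- p is open
    intro W hW
    have hW' : TopologicalSpace.GenerateOpen (VBasis E) W := hW
    rw [isOpen_iff_forall_mem_open]
    rintro x ⟨b, hbW, rfl⟩
    obtain ⟨δ, hδ, H⟩ := key E hpos hstar W hW' b hbW (Quot.out b.2) (Quot.out_eq _)
    obtain ⟨U, hUo, hUx, hUs⟩ := H (Quot.out b.2) (by rw [sub_self, nn_zero E hpos hstar]; exact hδ)
    exact ⟨U, fun x' hx' => ⟨⟨x', Quot.mk _ (Quot.out b.2)⟩, hUs x' hx', rfl⟩, hUo, hUx⟩
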